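/- Let B be a sesquilinear form on p-by-p matrix polynomials satisfying B(A*P, Q) = A*B(P,Q) and B(P, A*Q) = B(P,Q)*A^⊤ for all matrices A, additivity in each argument, and let {P_n}, {Q_n} be families of matrix polynomials with B(P_n, Q_m) = δ_{n,m} H_n where each H_n is invertible. Define the Christoffel–Darboux kernel K_n(x,z) := \sum_{k=0}^{n} Q_k(z)^⊤ * H_k^{-1} * P_k(x), regarded as a matrix polynomial in x with coefficients depending on z. Then for every m \le n and all matrices C_0, ..., C_m, one has B(K_n(·,z), \sum_{j=0}^{m} C_j Q_j(·)) = (\sum_{j=0}^{m} C_j Q_j(z))^⊤. -/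

import Mathlib

open Matrix

/-- Reproducing (projection) property of the Christoffel–Darboux kernel: for a sesquilinear
form `B` on matrix polynomials with biorthogonal families `{P_n}, {Q_n}` and invertible
matrix norms `H_n`, the kernel `K_n(x,z) = ∑_{k≤n} Q_k(z)ᵀ H_k⁻¹ P_k(x)` satisfies
`B(K_n(·,z), ∑_{j≤m} C_j Q_j) = (∑_{j≤m} C_j Q_j(z))ᵀ` for all `m ≤ n`. -/
theorem stmt_15 (p : ℕ)
    (B : Polynomial (Matrix (Fin p) (Fin p) ℂ) → Polynomial (Matrix (Fin p) (Fin p) ℂ) →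
      Matrix (Fin p) (Fin p) ℂ)
    (hB_addl : ∀ P P' Q, B (P + P') Q = B P Q + B P' Q)
    (hB_addr : ∀ P Q Q', B P (Q + Q') = B P Q + B P Q')
    (hB_left : ∀ (A : Matrix (Fin p) (Fin p) ℂ) (P Q),
      B (Polynomial.C A * P) Q = A * B P Q)
    (hB_right : ∀ (A : Matrix (Fin p) (Fin p) ℂ) (P Q),
      B P (Polynomial.C A * Q) = B P Q * Aᵀ)
    (Pn Qn : ℕ → Polynomial (Matrix (Fin p) (Fin p) ℂ))
    (H : ℕ → Matrix (Fin p) (Fin p) ℂ) (hH : ∀ k, IsUnit (H k))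
    (horth : ∀ k l, B (Pn k) (Qn l) = if k = l then H k else 0)
    (n m : ℕ) (hmn : m ≤ n) (Cf : ℕ → Matrix (Fin p) (Fin p) ℂ) (z : ℂ) :
    B (∑ k ∈ Finset.range (n + 1),
          Polynomial.C (((Qn k).eval (z • (1 : Matrix (Fin p) (Fin p) ℂ)))ᵀ * (H k)⁻¹) *
            Pn k)
        (∑ j ∈ Finset.range (m + 1), Polynomial.C (Cf j) * Qn j) =
      ((∑ j ∈ Finset.range (m + 1), Polynomial.C (Cf j) * Qn j).eval
          (z • (1 : Matrix (Fin p) (Fin p) ℂ)))ᵀ := by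
  have hB0l : ∀ Q, B 0 Q = 0 := by
    intro Q
    have := hB_addl 0 0 Q
    simpa using this.symm
  have hB0r : ∀ P, B P 0 = 0 := by
    intro P
    have := hB_addr P 0 0
    simpa using this.symm
  have hsuml : ∀ (s : Finset ℕ) (f : ℕ → Polynomial (Matrix (Fin p) (Fin p) ℂ)) Q,
      B (∑ k ∈ s, f k) Q = ∑ k ∈ s, B (f k) Q := by
    intro s f Q
    induction s using Finset.induction with
    | empty => simpa using hB0l Q
    | insert _ _ h ih => rw [Finset.sum_insert h, hB_addl, ih, Finset.sum_insert h]
  have hsumr : ∀ (s : Finset ℕ) P (f : ℕ → Polynomial (Matrix (Fin p) (Fin p) ℂ)),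
      B P (∑ k ∈ s, f k) = ∑ k ∈ s, B P (f k) := by
    intro s P f
    induction s using Finset.induction with
    | empty => simpa using hB0r P
    | insert _ _ h ih => rw [Finset.sum_insert h, hB_addr, ih, Finset.sum_insert h]
  rw [hsuml]
  have key : ∀ k ∈ Finset.range (n + 1),
      B (Polynomial.C (((Qn k).eval (z • (1 : Matrix (Fin p) (Fin p) ℂ)))ᵀ * (H k)⁻¹) * Pn k)
        (∑ j ∈ Finset.range (m + 1), Polynomial.C (Cf j) * Qn j) =
      if k ∈ Finset.range (m + 1) then
        ((Qn k).eval (z • (1 : Matrix (Fin p) (Fin p) ℂ)))ᵀ * (Cf k)ᵀ else 0 := by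
    intro k _
    rw [hB_left, hsumr, Finset.mul_sum]
    have : ∀ j, B (Pn k) (Polynomial.C (Cf j) * Qn j) =
        (if k = j then H k else 0) * (Cf j)ᵀ := by
      intro j; rw [hB_right, horth]
    simp only [this]
    by_cases hk : k ∈ Finset.range (m + 1)
    · rw [Finset.sum_eq_single k (fun j _ hj => by simp [Ne.symm hj]) (fun h => absurd hk h)]
      rw [if_pos hk, if_pos rfl, mul_assoc, ← mul_assoc ((H k)⁻¹),
        Matrix.nonsing_inv_mul _ ((Matrix.isUnit_iff_isUnit_det _).mp (hH k)), one_mul]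
    · rw [if_neg hk, Finset.sum_eq_zero]
      intro j hj
      have : k ≠ j := by
        rintro rfl; exact hk hj
      simp [this]
  rw [Finset.sum_congr rfl key]
  rw [Finset.sum_ite_mem,
    Finset.inter_eq_right.mpr (Finset.range_subset_range.mpr (by omega))]
  rw [Polynomial.eval_finset_sum, Matrix.transpose_sum]
  exact Finset.sum_congr rfl fun j _ => by rw [Polynomial.eval_C_mul, Matrix.transpose_mul]
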